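/- Define the map Φ: [0,1]^n → ℝ^n by Φ_i(p₁,…,pₙ) = p_i − (1/2)∑_{j≠i} p_i p_j + (1/3)∑_{j<k, j,k≠i} p_i p_j p_k − ⋯ + ((−1)^(n−1)/n)·p_i·∏_{j≠i} p_j. Then Φ is a bijection from the unit n-cube [0,1]^n onto the unit n-simplex {ρ ∈ ℝ^n : ρ_i ≥ 0, ∑_i ρ_i ≤ 1}. -/

import Mathlib

open Finset intervalIntegral

noncomputable def Aint {n : ℕ} (T : Finset (Fin n)) (p : Fin n → ℝ) : ℝ :=
  ∫ x in (0:ℝ)..1, ∏ j ∈ T, (1 - p j * x)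

lemma contA {n : ℕ} (T : Finset (Fin n)) (p : Fin n → ℝ) :
    Continuous fun x : ℝ => ∏ j ∈ T, (1 - p j * x) :=
  continuous_finset_prod _ fun j _ => by continuity

lemma intble {n : ℕ} (T : Finset (Fin n)) (p : Fin n → ℝ) (a b : ℝ) :
    IntervalIntegrable (fun x : ℝ => ∏ j ∈ T, (1 - p j * x)) MeasureTheory.volume a b :=
  (contA T p).intervalIntegrable a b

lemma integrand_pos {n : ℕ} (T : Finset (Fin n)) (p : Fin n → ℝ)
    (hp : ∀ j ∈ T, p j ≤ 1) {x : ℝ} (hx0 : 0 ≤ x) (hx1 : x < 1) :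
    0 < ∏ j ∈ T, (1 - p j * x) := by
  refine Finset.prod_pos fun j hj => ?_
  have : p j * x ≤ 1 * x := mul_le_mul_of_nonneg_right (hp j hj) hx0
  linarith

lemma A_pos {n : ℕ} (T : Finset (Fin n)) (p : Fin n → ℝ)
    (hp : ∀ j ∈ T, p j ≤ 1) : 0 < Aint T p := by
  refine intervalIntegral.intervalIntegral_pos_of_pos_on (intble T p 0 1) ?_ one_pos
  intro x hx
  exact integrand_pos T p hp hx.1.le hx.2

lemma A_anti {n : ℕ} (T : Finset (Fin n)) (p q : Fin n → ℝ)
    (h : ∀ j ∈ T, 0 ≤ p j ∧ p j ≤ q j ∧ q j ≤ 1) : Aint T q ≤ Aint T p := by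
  refine intervalIntegral.integral_mono_on zero_le_one (intble T q 0 1) (intble T p 0 1) ?_
  intro x hx
  obtain ⟨hx1, hx2⟩ := hx
  refine Finset.prod_le_prod (fun j hj => ?_) (fun j hj => ?_)
  · have : q j * x ≤ 1 * x := mul_le_mul_of_nonneg_right (h j hj).2.2 hx1
    linarith
  · have : p j * x ≤ q j * x := mul_le_mul_of_nonneg_right (h j hj).2.1 hx1
    linarith

lemma A_scale {n : ℕ} (T : Finset (Fin n)) (p : Fin n → ℝ) {l : ℝ} (hl : 1 < l)
    (hp : ∀ j ∈ T, 0 ≤ p j ∧ p j ≤ 1) :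
    Aint T (fun j => p j / l) < l * Aint T p := by
  have hl0 : (0:ℝ) < l := lt_trans one_pos hl
  have h1 : Aint T (fun j => p j / l) = l * ∫ x in (0:ℝ)..(1/l), ∏ j ∈ T, (1 - p j * x) := by
    unfold Aint
    have := intervalIntegral.integral_comp_mul_right
      (f := fun x : ℝ => ∏ j ∈ T, (1 - p j * x)) (a := 0) (b := 1) (c := 1/l) (by positivity)
    simp only [zero_mul, one_mul] at this
    have e : (fun x : ℝ => ∏ j ∈ T, (1 - p j / l * x))
        = fun x : ℝ => ∏ j ∈ T, (1 - p j * (x * (1/l))) := by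
      funext x; refine Finset.prod_congr rfl fun j _ => by field_simp
    rw [e, this]
    rw [smul_eq_mul]
    field_simp
  rw [h1]
  have hsplit : ∫ x in (0:ℝ)..1, ∏ j ∈ T, (1 - p j * x)
      = (∫ x in (0:ℝ)..(1/l), ∏ j ∈ T, (1 - p j * x))
        + ∫ x in (1/l:ℝ)..1, ∏ j ∈ T, (1 - p j * x) :=
    (intervalIntegral.integral_add_adjacent_intervals (intble T p 0 (1/l))
      (intble T p (1/l) 1)).symm
  have hpos : 0 < ∫ x in (1/l:ℝ)..1, ∏ j ∈ T, (1 - p j * x) := by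
    refine intervalIntegral.intervalIntegral_pos_of_pos_on (intble T p (1/l) 1) ?_ ?_
    · intro x hx
      exact integrand_pos T p (fun j hj => (hp j hj).2) (le_trans (by positivity) hx.1.le) hx.2
    · rw [div_lt_one hl0]; exact hl
  have h2 : Aint T p = (∫ x in (0:ℝ)..(1/l), ∏ j ∈ T, (1 - p j * x))
        + ∫ x in (1/l:ℝ)..1, ∏ j ∈ T, (1 - p j * x) := hsplit
  nlinarith [h2]

lemma A_repr {n : ℕ} (T : Finset (Fin n)) (p : Fin n → ℝ) :
    ∑ S ∈ T.powerset, (-1 : ℝ) ^ S.card / (S.card + 1) * ∏ j ∈ S, p j = Aint T p := by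
  have h : ∀ x : ℝ, ∏ j ∈ T, (1 - p j * x)
      = ∑ S ∈ T.powerset, ((-1 : ℝ) ^ S.card * ∏ j ∈ S, p j) * x ^ S.card := by
    intro x
    have := Finset.prod_add (fun j : Fin n => -(p j * x)) (fun _ => (1:ℝ)) T
    simp only [Finset.prod_const_one, mul_one] at this
    have e : ∀ j : Fin n, (1 : ℝ) - p j * x = -(p j * x) + 1 := by intro j; ring
    simp only [e, this]
    refine Finset.sum_congr rfl fun S _ => ?_
    calc ∏ i ∈ S, -(p i * x) = ∏ i ∈ S, ((-1) * p i * x) := by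
          refine Finset.prod_congr rfl fun i _ => by ring
      _ = ((-1 : ℝ) ^ S.card * ∏ j ∈ S, p j) * x ^ S.card := by
          rw [Finset.prod_mul_distrib, Finset.prod_mul_distrib, Finset.prod_const,
            Finset.prod_const]
  unfold Aint
  simp only [h]
  rw [integral_finset_sum]
  · refine Finset.sum_congr rfl fun S _ => ?_
    rw [intervalIntegral.integral_const_mul, integral_pow]
    simp
    ring
  · intro S _
    exact (Continuous.intervalIntegrable (by continuity) 0 1)

lemma sum_key {n : ℕ} (p : Fin n → ℝ) :
    ∑ i, p i * Aint (Finset.univ.erase i) p = 1 - ∏ j, (1 - p j) := by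
  have hderiv : ∀ x : ℝ, HasDerivAt (fun y : ℝ => ∏ j, (1 - p j * y))
      (∑ i, (∏ j ∈ Finset.univ.erase i, (1 - p j * x)) * (-(p i))) x := by
    intro x
    have h := HasDerivAt.finset_prod (u := (Finset.univ : Finset (Fin n)))
      (f := fun j (y : ℝ) => 1 - p j * y) (f' := fun j => -(p j)) (x := x)
      (fun i _ => by
        simpa using ((hasDerivAt_id x).const_mul (p i)).const_sub 1)
    simpa [smul_eq_mul, Finset.prod_fn] using h
  have hint : IntervalIntegrable
      (fun x : ℝ => ∑ i, (∏ j ∈ Finset.univ.erase i, (1 - p j * x)) * (-(p i)))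
      MeasureTheory.volume 0 1 := by
    apply Continuous.intervalIntegrable
    exact continuous_finset_sum _ fun i _ => (contA _ p).mul continuous_const
  have hftc := intervalIntegral.integral_eq_sub_of_hasDerivAt
    (f := fun y : ℝ => ∏ j, (1 - p j * y))
    (f' := fun x : ℝ => ∑ i, (∏ j ∈ Finset.univ.erase i, (1 - p j * x)) * (-(p i)))
    (fun x _ => hderiv x) hint
  have hsum : ∫ x in (0:ℝ)..1, ∑ i, (∏ j ∈ Finset.univ.erase i, (1 - p j * x)) * (-(p i))
      = ∑ i, -(p i * Aint (Finset.univ.erase i) p) := by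
    rw [intervalIntegral.integral_finset_sum (f := fun i x => (∏ j ∈ Finset.univ.erase i, (1 - p j * x)) * (-(p i))) (fun i _ =>
      ((contA _ p).mul continuous_const).intervalIntegrable 0 1)]
    refine Finset.sum_congr rfl fun i _ => ?_
    rw [intervalIntegral.integral_mul_const]
    unfold Aint; ring
  rw [hsum] at hftc
  simp only [mul_one, mul_zero, sub_zero, Finset.prod_const_one] at hftc
  have h2 : ∑ i, -(p i * Aint (Finset.univ.erase i) p)
      = -(∑ i, p i * Aint (Finset.univ.erase i) p) := by rw [Finset.sum_neg_distrib]
  rw [h2] at hftc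
  linarith [hftc]

-- injectivity half
lemma phi_le {n : ℕ} (p q : Fin n → ℝ)
    (hp : ∀ i, 0 ≤ p i ∧ p i ≤ 1) (hq : ∀ i, 0 ≤ q i ∧ q i ≤ 1)
    (heq : ∀ i, p i * Aint (Finset.univ.erase i) p = q i * Aint (Finset.univ.erase i) q) :
    ∀ i, p i ≤ q i := by
  by_contra hcon
  push_neg at hcon
  obtain ⟨i₁, hi₁⟩ := hcon
  set S : Finset (Fin n) := Finset.univ.filter (fun i => q i < p i) with hS
  have hSne : S.Nonempty := ⟨i₁, by simp [hS, hi₁]⟩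
  have hqpos : ∀ i ∈ S, 0 < q i := by
    intro i hi
    have hqp : q i < p i := by simpa [hS] using hi
    have hAp : 0 < Aint (Finset.univ.erase i) p := A_pos _ _ fun j _ => (hp j).2
    have hAq : 0 < Aint (Finset.univ.erase i) q := A_pos _ _ fun j _ => (hq j).2
    have hppos : 0 < p i := lt_of_le_of_lt (hq i).1 hqp
    have h1 : 0 < q i * Aint (Finset.univ.erase i) q := (heq i) ▸ mul_pos hppos hAp
    nlinarith [ (hq i).1 ]
  obtain ⟨i₀, hi₀S, hmax⟩ := Finset.exists_max_image S (fun i => p i / q i) hSne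
  have hq₀ : 0 < q i₀ := hqpos i₀ hi₀S
  have hqp₀ : q i₀ < p i₀ := by simpa [hS] using hi₀S
  set l : ℝ := p i₀ / q i₀ with hldef
  have hl : 1 < l := (one_lt_div hq₀).2 hqp₀
  have hl0 : (0:ℝ) < l := lt_trans one_pos hl
  have hall : ∀ j, p j / l ≤ q j := by
    intro j
    by_cases hj : j ∈ S
    · have := hmax j hj
      have hqj : 0 < q j := hqpos j hj
      rw [div_le_iff₀ hl0]
      calc p j = (p j / q j) * q j := by field_simp
        _ ≤ l * q j := mul_le_mul_of_nonneg_right this hqj.le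
        _ = q j * l := mul_comm _ _
    · have hpq : p j ≤ q j := by
        by_contra h'
        exact hj (by simp [hS]; linarith)
      calc p j / l ≤ p j / 1 := by
            apply div_le_div_of_nonneg_left (hp j).1 one_pos hl.le |>.trans_eq rfl
        _ = p j := div_one _
        _ ≤ q j := hpq
  have hanti : Aint (Finset.univ.erase i₀) q ≤ Aint (Finset.univ.erase i₀) (fun j => p j / l) :=
    A_anti _ _ _ fun j _ => ⟨div_nonneg (hp j).1 hl0.le, hall j, (hq j).2⟩
  have hscale : Aint (Finset.univ.erase i₀) (fun j => p j / l)
      < l * Aint (Finset.univ.erase i₀) p :=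
    A_scale _ _ hl fun j _ => hp j
  have hlt : Aint (Finset.univ.erase i₀) q < l * Aint (Finset.univ.erase i₀) p :=
    lt_of_le_of_lt hanti hscale
  have hp₀ : p i₀ = l * q i₀ := by rw [hldef, div_mul_cancel₀ _ hq₀.ne']
  have heq₀ := heq i₀
  rw [hp₀] at heq₀
  -- l * q i₀ * A p = q i₀ * A q  ⇒  A q = l * A p
  have : Aint (Finset.univ.erase i₀) q = l * Aint (Finset.univ.erase i₀) p := by
    have := heq₀
    field_simp at this ⊢
    nlinarith [this, hq₀]
  linarith

lemma surj_aux {n : ℕ} (ρ : Fin n → ℝ) (hρ0 : ∀ i, 0 ≤ ρ i) (hρs : ∑ i, ρ i ≤ 1) :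
    ∃ u : Fin n → ℝ, (∀ i, 0 ≤ u i ∧ u i ≤ 1) ∧
      ∀ i, u i * Aint (Finset.univ.erase i) u = ρ i := by
  classical
  set T : (Fin n → ℝ) → Fin n → ℝ :=
    fun p i => min 1 (ρ i / Aint (Finset.univ.erase i) p) with hT
  set D : Set (Fin n → ℝ) :=
    {p | (∀ i, 0 ≤ p i ∧ p i ≤ 1) ∧ ∀ i, p i ≤ T p i} with hD
  have hApos : ∀ (p : Fin n → ℝ), (∀ i, p i ≤ 1) → ∀ i,
      0 < Aint (Finset.univ.erase i) p := fun p hp i => A_pos _ _ fun j _ => hp j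
  have hTnonneg : ∀ (p : Fin n → ℝ), (∀ i, p i ≤ 1) → ∀ i, 0 ≤ T p i := by
    intro p hp i
    exact le_min zero_le_one (div_nonneg (hρ0 i) (hApos p hp i).le)
  have h0D : (fun _ => (0:ℝ)) ∈ D := by
    refine ⟨fun i => ⟨le_refl _, zero_le_one⟩, fun i => hTnonneg _ (fun _ => zero_le_one) i⟩
  have hTmono : ∀ p q : Fin n → ℝ, (∀ i, 0 ≤ p i ∧ p i ≤ 1) → (∀ i, 0 ≤ q i ∧ q i ≤ 1) →
      (∀ i, p i ≤ q i) → ∀ i, T p i ≤ T q i := by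
    intro p q hp hq hpq i
    refine min_le_min le_rfl ?_
    have h1 : Aint (Finset.univ.erase i) q ≤ Aint (Finset.univ.erase i) p :=
      A_anti _ _ _ fun j _ => ⟨(hp j).1, hpq j, (hq j).2⟩
    have h2 : 0 < Aint (Finset.univ.erase i) q := hApos q (fun j => (hq j).2) i
    exact div_le_div_of_nonneg_left (hρ0 i) h2 h1
  set u : Fin n → ℝ := fun i => sSup ((fun p => p i) '' D) with hu
  have hbdd : ∀ i, BddAbove ((fun p : Fin n → ℝ => p i) '' D) := by
    intro i
    refine ⟨1, ?_⟩
    rintro x ⟨p, hpD, rfl⟩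
    exact (hpD.1 i).2
  have hne : ∀ i, ((fun p : Fin n → ℝ => p i) '' D).Nonempty :=
    fun i => ⟨0, ⟨_, h0D, rfl⟩⟩
  have hle_u : ∀ p ∈ D, ∀ i, p i ≤ u i := by
    intro p hpD i
    exact le_csSup (hbdd i) ⟨p, hpD, rfl⟩
  have hu0 : ∀ i, 0 ≤ u i := fun i => hle_u _ h0D i
  have hu1 : ∀ i, u i ≤ 1 := by
    intro i
    refine csSup_le (hne i) ?_
    rintro x ⟨p, hpD, rfl⟩
    exact (hpD.1 i).2
  have huC : ∀ i, 0 ≤ u i ∧ u i ≤ 1 := fun i => ⟨hu0 i, hu1 i⟩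
  have huTu : ∀ i, u i ≤ T u i := by
    intro i
    refine csSup_le (hne i) ?_
    rintro x ⟨p, hpD, rfl⟩
    exact le_trans (hpD.2 i) (hTmono p u hpD.1 huC (hle_u p hpD) i)
  have hTuC : ∀ i, 0 ≤ T u i ∧ T u i ≤ 1 :=
    fun i => ⟨hTnonneg u hu1 i, min_le_left _ _⟩
  have hTuD : T u ∈ D := ⟨hTuC, fun i => hTmono u (T u) huC hTuC huTu i⟩
  have hfix : ∀ i, T u i = u i := fun i => le_antisymm (hle_u _ hTuD i) (huTu i)
  have hAu : ∀ i, 0 < Aint (Finset.univ.erase i) u := hApos u hu1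
  -- the clamp is never active
  have hclamp : ∀ i, ρ i ≤ Aint (Finset.univ.erase i) u := by
    by_contra hcon
    push_neg at hcon
    obtain ⟨i₀, hi₀⟩ := hcon
    have hui₀ : u i₀ = 1 := by
      rw [← hfix i₀, hT]
      simp only
      rw [min_eq_left]
      rw [le_div_iff₀ (hAu i₀)]
      linarith
    have hprod : (∏ j, (1 - u j)) = 0 :=
      Finset.prod_eq_zero (Finset.mem_univ i₀) (by rw [hui₀]; ring)
    have hsum1 : ∑ i, u i * Aint (Finset.univ.erase i) u = 1 := by
      rw [sum_key u, hprod]; ring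
    have hlesum : ∀ i, u i * Aint (Finset.univ.erase i) u ≤ ρ i := by
      intro i
      have h1 : u i ≤ ρ i / Aint (Finset.univ.erase i) u := by
        rw [← hfix i]; exact min_le_right _ _
      calc u i * Aint (Finset.univ.erase i) u
          ≤ (ρ i / Aint (Finset.univ.erase i) u) * Aint (Finset.univ.erase i) u :=
            mul_le_mul_of_nonneg_right h1 (hAu i).le
        _ = ρ i := div_mul_cancel₀ _ (hAu i).ne'
    have hstrict : u i₀ * Aint (Finset.univ.erase i₀) u < ρ i₀ := by
      rw [hui₀, one_mul]; exact hi₀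
    have : (1:ℝ) < ∑ i, ρ i := by
      calc (1:ℝ) = ∑ i, u i * Aint (Finset.univ.erase i) u := hsum1.symm
        _ < ∑ i, ρ i :=
          Finset.sum_lt_sum (fun i _ => hlesum i) ⟨i₀, Finset.mem_univ i₀, hstrict⟩
    linarith
  refine ⟨u, huC, fun i => ?_⟩
  have h1 : u i = ρ i / Aint (Finset.univ.erase i) u := by
    rw [← hfix i, hT]
    simp only
    rw [min_eq_right]
    rw [div_le_one (hAu i)]
    exact hclamp i
  rw [h1, div_mul_cancel₀ _ (hAu i).ne']

theorem stmt_7 (n : ℕ) :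
    Set.BijOn
      (fun (p : Fin n → ℝ) (i : Fin n) =>
        ∑ S ∈ (Finset.univ.erase i).powerset,
          (-1 : ℝ) ^ S.card / (S.card + 1) * p i * ∏ j ∈ S, p j)
      (Set.univ.pi fun _ => Set.Icc (0 : ℝ) 1)
      {ρ : Fin n → ℝ | (∀ i, 0 ≤ ρ i) ∧ ∑ i, ρ i ≤ 1} := by
  have hfun : ∀ (p : Fin n → ℝ) (i : Fin n),
      (∑ S ∈ (Finset.univ.erase i).powerset,
        (-1 : ℝ) ^ S.card / (S.card + 1) * p i * ∏ j ∈ S, p j)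
      = p i * Aint (Finset.univ.erase i) p := by
    intro p i
    rw [← A_repr (Finset.univ.erase i) p, Finset.mul_sum]
    exact Finset.sum_congr rfl fun S _ => by ring
  have hmem : ∀ p : Fin n → ℝ,
      p ∈ (Set.univ.pi fun _ => Set.Icc (0 : ℝ) 1) ↔ ∀ i, 0 ≤ p i ∧ p i ≤ 1 := by
    intro p
    simp [Set.mem_univ_pi, Set.mem_Icc, Pi.le_def, forall_and]
  simp only [hfun]
  refine ⟨?_, ?_, ?_⟩
  · -- MapsTo
    intro p hp
    rw [hmem] at hp
    constructor
    · intro i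
      exact mul_nonneg (hp i).1 (A_pos _ _ fun j _ => (hp j).2).le
    · rw [sum_key p]
      have : 0 ≤ ∏ j, (1 - p j) := Finset.prod_nonneg fun j _ => by linarith [(hp j).2]
      linarith
  · -- InjOn
    intro p hp q hq heq
    rw [hmem] at hp hq
    have heq' : ∀ i, p i * Aint (Finset.univ.erase i) p = q i * Aint (Finset.univ.erase i) q :=
      fun i => congrFun heq i
    funext i
    exact le_antisymm (phi_le p q hp hq heq' i)
      (phi_le q p hq hp (fun i => (heq' i).symm) i)
  · -- SurjOn
    intro ρ hρ
    obtain ⟨hρ0, hρs⟩ := hρ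
    obtain ⟨u, huC, hueq⟩ := surj_aux ρ hρ0 hρs
    exact ⟨u, (hmem u).2 huC, funext hueq⟩
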